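/- If V : ℕ × ℕ → ℝ is coordinatewise nondecreasing and submodular, then for every (a,b) ∈ ℕ × ℕ with a ≥ b the vertical forward difference of Δ_V satisfies the bound Δ_V(a,b+1) − Δ_V(a,b) ≤ −γ·λ_s·(V(b+2,b+2) − V(b+1,b+1)), and in particular this quantity is at most 0. -/

import Mathlib

noncomputable def Qsense (γ lams cs : ℝ) (V : ℕ × ℕ → ℝ) (p : ℕ × ℕ) : ℝ :=
  (p.1 : ℝ) + cs + γ * (lams * V (p.1 + 1, 1) + (1 - lams) * V (p.1 + 1, p.2 + 1))

noncomputable def Qcomm (γ lamc cc : ℝ) (V : ℕ × ℕ → ℝ) (p : ℕ × ℕ) : ℝ :=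
  (p.1 : ℝ) + cc + γ * (lamc * V (p.2 + 1, p.2 + 1) + (1 - lamc) * V (p.1 + 1, p.2 + 1))

noncomputable def Delta (γ lams lamc cs cc : ℝ) (V : ℕ × ℕ → ℝ) (p : ℕ × ℕ) : ℝ :=
  Qsense γ lams cs V p - Qcomm γ lamc cc V p

noncomputable def Tbell (γ lams lamc cs cc : ℝ) (V : ℕ × ℕ → ℝ) : ℕ × ℕ → ℝ :=
  fun p => min (Qsense γ lams cs V p) (Qcomm γ lamc cc V p)

/-- `V` is nondecreasing in each argument separately. -/
def CoordNondecr (V : ℕ × ℕ → ℝ) : Prop :=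
  (∀ a a' b : ℕ, a ≤ a' → V (a, b) ≤ V (a', b)) ∧
  (∀ a b b' : ℕ, b ≤ b' → V (a, b) ≤ V (a, b'))

/-- Submodularity on the lattice `ℕ × ℕ` (componentwise max/min). -/
def Submodular (W : ℕ × ℕ → ℝ) : Prop :=
  ∀ x y : ℕ × ℕ, W (x ⊔ y) + W (x ⊓ y) ≤ W x + W y

/-- Bound on the vertical forward difference of the action difference. -/
theorem delta_vertical_difference_bound
    (γ lams lamc cs cc : ℝ)
    (hγ0 : 0 < γ) (hγ1 : γ < 1) (hs0 : 0 ≤ lams) (hsc : lams ≤ lamc) (hc1 : lamc ≤ 1)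
    (hcs : 0 ≤ cs) (hcc : 0 ≤ cc)
    (V : ℕ × ℕ → ℝ) (hmono : CoordNondecr V) (hsub : Submodular V) :
    ∀ a b : ℕ, b ≤ a →
      Delta γ lams lamc cs cc V (a, b + 1) - Delta γ lams lamc cs cc V (a, b) ≤
          -(γ * lams * (V (b + 2, b + 2) - V (b + 1, b + 1))) ∧
      Delta γ lams lamc cs cc V (a, b + 1) - Delta γ lams lamc cs cc V (a, b) ≤ 0 := by

  intro a b hab
  have hx : ((a+1, b+1) : ℕ×ℕ) ⊔ (b+1, b+2) = (a+1, b+2) := by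
    simp [Prod.ext_iff]; omega
  have hn : ((a+1, b+1) : ℕ×ℕ) ⊓ (b+1, b+2) = (b+1, b+1) := by
    simp [Prod.ext_iff]; omega
  have hsub1 : V (a+1, b+2) + V (b+1, b+1) ≤ V (a+1, b+1) + V (b+1, b+2) := by
    have := hsub (a+1, b+1) (b+1, b+2); rw [hx, hn] at this; exact this
  have hm1 : V (b+1, b+2) ≤ V (b+2, b+2) := hmono.1 _ _ _ (by omega)
  have hm2 : V (b+1, b+1) ≤ V (b+2, b+2) :=
    le_trans (hmono.2 _ _ _ (by omega)) hm1
  have key : 0 ≤ γ * (lamc - lams) *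
      ((V (b+2, b+2) - V (b+1, b+1)) - (V (a+1, b+2) - V (a+1, b+1))) :=
    mul_nonneg (mul_nonneg hγ0.le (by linarith)) (by linarith)
  have hDb : 0 ≤ γ * lams * (V (b+2, b+2) - V (b+1, b+1)) :=
    mul_nonneg (mul_nonneg hγ0.le hs0) (by linarith)
  have e2 : b + 1 + 1 = b + 2 := rfl
  constructor
  · simp only [Delta, Qsense, Qcomm, e2]
    nlinarith [key]
  · simp only [Delta, Qsense, Qcomm, e2]
    nlinarith [key, hDb]
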